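/- Fix integers n ≥ 1, q ≥ 2, and M ≥ 1. If (M+1)M/2 · (q/(q−1))^{n−1} · q^{−2ⁿ+n+1} < 1, then there exists a q-ary word of length M that avoids Zₙ; consequently f(n,q) > M. -/

import Mathlib

/-- `W` is an instance of the pattern `V`: the image of `V` under a semigroup
homomorphism sending each letter to a nonempty word. -/
def IsInst {α β : Type} (V : List α) (W : List β) : Prop :=
  ∃ φ : α → List β, (∀ a ∈ V, φ a ≠ []) ∧ W = (V.map φ).flatten

/-- `U` encounters `V`: some contiguous subword (infix) of `U` is an instance of `V`. -/
def Encounters {α β : Type} (U : List β) (V : List α) : Prop :=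
  ∃ W : List β, W <:+: U ∧ IsInst V W

/-- `U` avoids `V`: `U` does not encounter `V`. -/
def Avoids {α β : Type} (U : List β) (V : List α) : Prop :=
  ¬ Encounters U V

/-- The Zimin words over the alphabet ℕ: `Z₀ = ε`, `Z_{n+1} = Zₙ · n · Zₙ`. -/
def Zimin : ℕ → List ℕ
  | 0 => []
  | n + 1 => Zimin n ++ n :: Zimin n

/-- `zimf n q` is the smallest `M` such that every `q`-ary word of length `M`
encounters the Zimin word `Zₙ`. -/
noncomputable def zimf (n q : ℕ) : ℕ :=
  sInf {M : ℕ | ∀ W : List (Fin q), W.length = M → Encounters W (Zimin n)}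

/-- `ZC n q M` is the set of `q`-ary words of length `M` that are instances of `Zₙ`. -/
def ZC (n q M : ℕ) : Set (List (Fin q)) :=
  {W | W.length = M ∧ IsInst (Zimin n) W}

lemma zimin_lt (n : ℕ) : ∀ a ∈ Zimin n, a < n := by
  induction n with
  | zero => simp [Zimin]
  | succ n ih =>
    intro a ha
    simp only [Zimin, List.mem_append, List.mem_cons] at ha
    rcases ha with h | h | h
    · exact (ih a h).trans (Nat.lt_succ_self n)
    · omega
    · exact (ih a h).trans (Nat.lt_succ_self n)

lemma zimin_length (n : ℕ) : (Zimin n).length = 2 ^ n - 1 := by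
  induction n with
  | zero => simp [Zimin]
  | succ n ih =>
    simp only [Zimin, List.length_append, List.length_cons, ih]
    have : 1 ≤ 2 ^ n := Nat.one_le_two_pow
    omega

lemma isInst_length {α β : Type} {V : List α} {W : List β} (h : IsInst V W) :
    V.length ≤ W.length := by
  obtain ⟨φ, hφ, rfl⟩ := h
  induction V with
  | nil => simp
  | cons a V ih =>
    simp only [List.map_cons, List.flatten_cons, List.length_append, List.length_cons]
    have h1 : 1 ≤ (φ a).length := by
      have := hφ a (by simp)
      exact List.length_pos_iff.mpr this
    have h2 := ih (fun b hb => hφ b (by simp [hb]))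
    omega

lemma isInst_zimin_length {β : Type} {n : ℕ} {W : List β} (h : IsInst (Zimin n) W) :
    2 ^ n - 1 ≤ W.length := by
  have := isInst_length h
  rwa [zimin_length] at this

lemma isInst_nil {β : Type} {W : List β} : IsInst ([] : List ℕ) W ↔ W = [] := by
  constructor
  · rintro ⟨φ, -, rfl⟩; simp
  · rintro rfl; exact ⟨fun _ => [], by simp, by simp⟩

lemma isInst_zimin_one {β : Type} {W : List β} : IsInst (Zimin 1) W ↔ W ≠ [] := by
  constructor
  · rintro ⟨φ, hφ, rfl⟩
    simp only [Zimin, List.map_cons, List.flatten]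
    simp [Zimin]
    exact hφ 0 (by simp [Zimin])
  · intro hW
    exact ⟨fun _ => W, fun a _ => hW, by simp [Zimin]⟩

lemma isInst_zimin_succ {β : Type} {n : ℕ} {W : List β} :
    IsInst (Zimin (n + 1)) W ↔
      ∃ A B : List β, IsInst (Zimin n) A ∧ B ≠ [] ∧ W = A ++ B ++ A := by
  constructor
  · rintro ⟨φ, hφ, rfl⟩
    refine ⟨((Zimin n).map φ).flatten, φ n, ⟨φ, fun a ha => hφ a (by simp [Zimin, ha]), rfl⟩,
      hφ n (by simp [Zimin]), ?_⟩
    simp [Zimin]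
  · rintro ⟨A, B, ⟨ψ, hψ, rfl⟩, hB, rfl⟩
    refine ⟨fun a => if a = n then B else ψ a, ?_, ?_⟩
    · intro a ha
      simp only [Zimin, List.mem_append, List.mem_cons] at ha
      rcases ha with h | h | h
      · simp only []; rw [if_neg (Nat.ne_of_lt (zimin_lt n a h))]; exact hψ a h
      · simp [h, hB]
      · simp only []; rw [if_neg (Nat.ne_of_lt (zimin_lt n a h))]; exact hψ a h
    · have hmap : (Zimin n).map (fun a => if a = n then B else ψ a) = (Zimin n).map ψ := by
        apply List.map_congr_left
        intro a ha
        rw [if_neg (Nat.ne_of_lt (zimin_lt n a ha))]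
      simp [Zimin, hmap]

open Finset in
def allWords (q : ℕ) : ℕ → Finset (List (Fin q))
  | 0 => {[]}
  | L + 1 => Finset.image₂ List.cons Finset.univ (allWords q L)

lemma cons_inj2 {α : Type*} : Function.Injective2 (List.cons (α := α)) := by
  intro a b c d h
  simpa using h

lemma mem_allWords {q L : ℕ} {W : List (Fin q)} : W ∈ allWords q L ↔ W.length = L := by
  induction L generalizing W with
  | zero => simp [allWords, List.length_eq_zero_iff]
  | succ L ih =>
    cases W with
    | nil =>
      simp only [allWords, Finset.mem_image₂, Finset.mem_univ, true_and, List.length_nil]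
      constructor
      · rintro ⟨a, l, -, h⟩; exact absurd h (by simp)
      · omega
    | cons a W =>
      simp only [allWords, Finset.mem_image₂, Finset.mem_univ, true_and, List.length_cons]
      constructor
      · rintro ⟨b, l, hl, h⟩
        obtain ⟨rfl, rfl⟩ : b = a ∧ l = W := by simpa [List.cons.injEq, eq_comm] using h
        have := ih.mp hl
        omega
      · intro h
        exact ⟨a, W, ih.mpr (by omega), rfl⟩

lemma card_allWords (q L : ℕ) : (allWords q L).card = q ^ L := by
  induction L with
  | zero => simp [allWords]
  | succ L ih =>
    rw [allWords, Finset.card_image₂ cons_inj2, ih]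
    simp [pow_succ, mul_comm]

open Classical in
noncomputable def Iset (n q L : ℕ) : Finset (List (Fin q)) :=
  (allWords q L).filter (fun W => IsInst (Zimin n) W)

lemma mem_Iset {n q L : ℕ} {W : List (Fin q)} :
    W ∈ Iset n q L ↔ W.length = L ∧ IsInst (Zimin n) W := by
  simp [Iset, mem_allWords]

lemma Iset_card_le (n q L : ℕ) : (Iset n q L).card ≤ q ^ L := by
  classical
  calc (Iset n q L).card ≤ (allWords q L).card := Finset.card_filter_le _ _
  _ = q ^ L := card_allWords q L

lemma Iset_empty_of_lt {n q L : ℕ} (h : L < 2 ^ n - 1) : Iset n q L = ∅ := by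
  ext W
  simp only [mem_Iset, Finset.notMem_empty, iff_false, not_and]
  rintro rfl hI
  exact absurd (isInst_zimin_length hI) (by omega)

open Classical in
noncomputable def dec (n : ℕ) {q : ℕ} (W : List (Fin q)) : List (Fin q) × List (Fin q) :=
  if h : ∃ A B : List (Fin q), IsInst (Zimin n) A ∧ B ≠ [] ∧ W = A ++ B ++ A then
    (h.choose, h.choose_spec.choose) else ([], [])

lemma dec_spec {n q : ℕ} {W : List (Fin q)} (h : IsInst (Zimin (n + 1)) W) :
    IsInst (Zimin n) (dec n W).1 ∧ (dec n W).2 ≠ [] ∧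
      W = (dec n W).1 ++ (dec n W).2 ++ (dec n W).1 := by
  have h' := isInst_zimin_succ.mp h
  rw [dec, dif_pos h']
  exact ⟨h'.choose_spec.choose_spec.1, h'.choose_spec.choose_spec.2.1,
    h'.choose_spec.choose_spec.2.2⟩

lemma Iset_card_rec (n q L : ℕ) :
    (Iset (n + 1) q L).card ≤
      ∑ a ∈ (Finset.range L).filter (fun a => 2 * a + 1 ≤ L ∧ 2 ^ n - 1 ≤ a),
        (Iset n q a).card * q ^ (L - 2 * a) := by
  classical
  set S := (Finset.range L).filter (fun a => 2 * a + 1 ≤ L ∧ 2 ^ n - 1 ≤ a) with hS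
  have key : (Iset (n + 1) q L).card ≤
      (S.sigma (fun a => (Iset n q a) ×ˢ (allWords q (L - 2 * a)))).card := by
    apply Finset.card_le_card_of_injOn (fun W => ⟨(dec n W).1.length, (dec n W)⟩)
    · intro W hW
      rw [Finset.mem_coe, mem_Iset] at hW
      obtain ⟨hlen, hI⟩ := hW
      obtain ⟨hA, hB, hW⟩ := dec_spec hI
      set A := (dec n W).1
      set B := (dec n W).2
      have hWlen : A.length + (B.length + A.length) = L := by
        rw [hW] at hlen; simpa using hlen
      have hBpos : 1 ≤ B.length := List.length_pos_iff.mpr hB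
      have hAge : 2 ^ n - 1 ≤ A.length := isInst_zimin_length hA
      simp only [Finset.mem_coe, Finset.mem_sigma, hS, Finset.mem_filter, Finset.mem_range,
        Finset.mem_product, mem_Iset, mem_allWords]
      refine ⟨⟨by have : A.length = (dec n W).1.length := rfl; omega,
        by have : A.length = (dec n W).1.length := rfl; omega, hAge⟩, ⟨by trivial, hA⟩, ?_⟩
      have e1 : B.length = (dec n W).2.length := rfl
      have e2 : A.length = (dec n W).1.length := rfl
      omega
    · intro W hW W' hW' heq
      rw [Finset.mem_coe, mem_Iset] at hW hW'
      obtain ⟨-, -, hWe⟩ := dec_spec hW.2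
      obtain ⟨-, -, hWe'⟩ := dec_spec hW'.2
      have : dec n W = dec n W' := by
        have := Sigma.mk.inj_iff.mp heq
        exact eq_of_heq this.2
      rw [hWe, hWe', this]
  calc (Iset (n + 1) q L).card ≤ _ := key
  _ = ∑ a ∈ S, ((Iset n q a) ×ˢ (allWords q (L - 2 * a))).card := Finset.card_sigma _ _
  _ = ∑ a ∈ S, (Iset n q a).card * q ^ (L - 2 * a) := by
      apply Finset.sum_congr rfl
      intro a _
      rw [Finset.card_product, card_allWords]

lemma geomLe {x : ℝ} (h0 : 0 ≤ x) (h1 : x < 1) (k : ℕ) :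
    ∑ j ∈ Finset.range k, x ^ j ≤ (1 - x)⁻¹ := by
  have hx1 : x ≠ 1 := ne_of_lt h1
  rw [geom_sum_eq hx1]
  have h2 : (0:ℝ) < 1 - x := by linarith
  have h3 : (x ^ k - 1) / (x - 1) = (1 - x ^ k) / (1 - x) := by
    rw [div_eq_div_iff (by linarith) (by linarith)]; ring
  rw [h3, inv_eq_one_div]
  gcongr
  nlinarith [pow_nonneg h0 k]

lemma sum_pow_le {x : ℝ} (h0 : 0 ≤ x) (h1 : x < 1) {m : ℕ} (S : Finset ℕ)
    (hS : ∀ a ∈ S, m ≤ a) : ∑ a ∈ S, x ^ a ≤ x ^ m * (1 - x)⁻¹ := by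
  set N := S.sup id + 1 with hN
  have hsub : S ⊆ Finset.Ico m N := by
    intro a ha
    exact Finset.mem_Ico.mpr ⟨hS a ha, Nat.lt_succ_of_le (Finset.le_sup (f := id) ha)⟩
  calc ∑ a ∈ S, x ^ a ≤ ∑ a ∈ Finset.Ico m N, x ^ a :=
        Finset.sum_le_sum_of_subset_of_nonneg hsub (fun a _ _ => pow_nonneg h0 a)
  _ = ∑ j ∈ Finset.range (N - m), x ^ (m + j) := by rw [Finset.sum_Ico_eq_sum_range]
  _ = x ^ m * ∑ j ∈ Finset.range (N - m), x ^ j := by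
      rw [Finset.mul_sum]; exact Finset.sum_congr rfl (fun j _ => pow_add x m j)
  _ ≤ x ^ m * (1 - x)⁻¹ :=
      mul_le_mul_of_nonneg_left (geomLe h0 h1 _) (pow_nonneg h0 m)

lemma Iset_bound {q : ℕ} (hq : 2 ≤ q) :
    ∀ n, 1 ≤ n → ∀ L : ℕ, ((Iset n q L).card : ℝ) ≤
      ((q : ℝ) / ((q : ℝ) - 1)) ^ (n - 1) * (q : ℝ) ^ ((L : ℤ) - 2 ^ n + n + 1) := by
  have hQ1 : (1 : ℝ) < (q : ℝ) := by exact_mod_cast hq.trans_lt' one_lt_two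
  have hQ0 : (0 : ℝ) < (q : ℝ) := by linarith
  have hQne : (q : ℝ) ≠ 0 := ne_of_gt hQ0
  set Q : ℝ := (q : ℝ) with hQdef
  set D : ℝ := Q / (Q - 1) with hDdef
  have hD0 : 0 ≤ D := div_nonneg hQ0.le (by linarith)
  intro n hn
  induction n, hn using Nat.le_induction with
  | base =>
    intro L
    rw [show (1 - 1 : ℕ) = 0 from rfl, pow_zero, one_mul]
    have he : (L : ℤ) - 2 ^ 1 + ((1 : ℕ) : ℤ) + 1 = (L : ℤ) := by push_cast; ring
    rw [he]
    rw [show ((L : ℤ)) = ((L : ℕ) : ℤ) from rfl, zpow_natCast]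
    calc ((Iset 1 q L).card : ℝ) ≤ ((q ^ L : ℕ) : ℝ) := by exact_mod_cast Iset_card_le 1 q L
    _ = Q ^ L := by push_cast; rfl
  | succ n hn ih =>
    intro L
    set S := (Finset.range L).filter (fun a => 2 * a + 1 ≤ L ∧ 2 ^ n - 1 ≤ a) with hSdef
    have step1 : ((Iset (n + 1) q L).card : ℝ) ≤
        ∑ a ∈ S, ((Iset n q a).card : ℝ) * Q ^ ((L : ℤ) - 2 * a) := by
      have h0 := Iset_card_rec n q L
      calc ((Iset (n + 1) q L).card : ℝ)
          ≤ ((∑ a ∈ S, (Iset n q a).card * q ^ (L - 2 * a) : ℕ) : ℝ) := by exact_mod_cast h0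
      _ = ∑ a ∈ S, ((Iset n q a).card : ℝ) * Q ^ ((L : ℤ) - 2 * a) := by
          push_cast
          apply Finset.sum_congr rfl
          intro a ha
          simp only [hSdef, Finset.mem_filter, Finset.mem_range] at ha
          congr 1
          rw [← zpow_natCast Q (L - 2 * a)]
          congr 1
          omega
    have step2 : ∑ a ∈ S, ((Iset n q a).card : ℝ) * Q ^ ((L : ℤ) - 2 * a) ≤
        ∑ a ∈ S, (D ^ (n - 1) * Q ^ ((L : ℤ) - 2 ^ n + n + 1)) * (Q⁻¹) ^ a := by
      apply Finset.sum_le_sum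
      intro a ha
      have h1 : ((Iset n q a).card : ℝ) ≤ D ^ (n - 1) * Q ^ ((a : ℤ) - 2 ^ n + n + 1) := ih a
      have h2 : (0 : ℝ) ≤ Q ^ ((L : ℤ) - 2 * a) := le_of_lt (zpow_pos hQ0 _)
      calc ((Iset n q a).card : ℝ) * Q ^ ((L : ℤ) - 2 * a)
          ≤ (D ^ (n - 1) * Q ^ ((a : ℤ) - 2 ^ n + n + 1)) * Q ^ ((L : ℤ) - 2 * a) :=
            mul_le_mul_of_nonneg_right h1 h2
      _ = (D ^ (n - 1) * Q ^ ((L : ℤ) - 2 ^ n + n + 1)) * (Q⁻¹) ^ a := by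
            rw [mul_assoc, mul_assoc, ← zpow_add₀ hQne]
            congr 1
            rw [show (Q⁻¹) ^ a = Q ^ (-(a : ℤ)) by rw [zpow_neg, ← inv_zpow, zpow_natCast],
              ← zpow_add₀ hQne]
            congr 1
            ring
    have step3 : ∑ a ∈ S, (D ^ (n - 1) * Q ^ ((L : ℤ) - 2 ^ n + n + 1)) * (Q⁻¹) ^ a ≤
        (D ^ (n - 1) * Q ^ ((L : ℤ) - 2 ^ n + n + 1)) * ((Q⁻¹) ^ (2 ^ n - 1) * (1 - Q⁻¹)⁻¹) := by
      rw [← Finset.mul_sum]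
      apply mul_le_mul_of_nonneg_left
      · apply sum_pow_le (by positivity) (by rw [inv_lt_one_iff₀]; right; exact hQ1)
        intro a ha
        simp only [hSdef, Finset.mem_filter, Finset.mem_range] at ha
        exact ha.2.2
      · positivity
    have final : (D ^ (n - 1) * Q ^ ((L : ℤ) - 2 ^ n + n + 1)) *
        ((Q⁻¹) ^ (2 ^ n - 1) * (1 - Q⁻¹)⁻¹) =
        D ^ (n + 1 - 1) * Q ^ ((L : ℤ) - 2 ^ (n + 1) + (n + 1) + 1) := by
      have hinv : (1 - Q⁻¹)⁻¹ = D := by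
        rw [hDdef]
        rw [show (1 - Q⁻¹) = (Q - 1) / Q by field_simp, inv_div]
      have hpow : (Q⁻¹) ^ (2 ^ n - 1) = Q ^ ((1 : ℤ) - 2 ^ n) := by
        rw [← zpow_natCast Q⁻¹ (2 ^ n - 1), inv_zpow, ← zpow_neg]
        congr 1
        have : 1 ≤ 2 ^ n := Nat.one_le_two_pow
        push_cast [this]
        ring
      rw [hpow, hinv]
      have hD : D ^ (n - 1) * D = D ^ (n + 1 - 1) := by
        rw [← pow_succ]
        congr 1
        omega
      calc D ^ (n - 1) * Q ^ ((L : ℤ) - 2 ^ n + n + 1) * (Q ^ ((1 : ℤ) - 2 ^ n) * D)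
          = (D ^ (n - 1) * D) * (Q ^ ((L : ℤ) - 2 ^ n + n + 1) * Q ^ ((1 : ℤ) - 2 ^ n)) := by ring
      _ = D ^ (n + 1 - 1) * Q ^ ((L : ℤ) - 2 ^ (n + 1) + (n + 1) + 1) := by
          rw [hD, ← zpow_add₀ hQne]
          congr 1
          push_cast
          ring
    calc ((Iset (n + 1) q L).card : ℝ) ≤ _ := step1
    _ ≤ _ := step2
    _ ≤ _ := step3
    _ = _ := final

lemma drop_eq_of_take_drop {β : Type} {W x : List β} {p k : ℕ}
    (h : (W.drop p).take k = x) (hk : x.length = k) : W.drop p = x ++ W.drop (p + k) := by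
  conv_lhs => rw [← List.take_append_drop k (W.drop p)]
  rw [h, List.drop_drop]

lemma infix_of_two_occ {β : Type} {W x : List β} {p r : ℕ}
    (hp : (W.drop p).take x.length = x) (hr : (W.drop r).take x.length = x)
    (hlt : p + x.length < r) (hrW : r + x.length ≤ W.length) :
    ∃ u : List β, u ≠ [] ∧ (x ++ u ++ x) <:+: W := by
  set e := p + x.length with he
  set u := (W.drop e).take (r - e) with hu
  have hW1 : W.drop p = x ++ W.drop e := drop_eq_of_take_drop hp rfl
  have hW2 : W.drop e = u ++ W.drop r := by
    conv_lhs => rw [← List.take_append_drop (r - e) (W.drop e)]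
    rw [List.drop_drop]
    congr 2
    omega
  have hW3 : W.drop r = x ++ W.drop (r + x.length) := drop_eq_of_take_drop hr rfl
  have hulen : u.length = r - e := by
    rw [hu, List.length_take, List.length_drop]
    omega
  refine ⟨u, ?_, W.take p, W.drop (r + x.length), ?_⟩
  · intro hnil
    rw [hnil] at hulen
    simp at hulen
    omega
  · conv_rhs => rw [← List.take_append_drop p W, hW1, hW2, hW3]
    simp [List.append_assoc]

lemma occ_of_infix_take {β : Type} {W x : List β} {a L : ℕ}
    (h : x <:+: (W.drop a).take L) :
    ∃ p, a ≤ p ∧ p + x.length ≤ a + L ∧ (W.drop p).take x.length = x := by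
  obtain ⟨s, t, hst⟩ := h
  have hlen : s.length + x.length + t.length ≤ L := by
    have := congrArg List.length hst
    simp only [List.length_append, List.length_take] at this
    omega
  have hdrop : W.drop a = s ++ x ++ (t ++ (W.drop a).drop L) := by
    conv_lhs => rw [← List.take_append_drop L (W.drop a), ← hst]
    simp [List.append_assoc]
  refine ⟨a + s.length, Nat.le_add_right _ _, by omega, ?_⟩
  rw [← List.drop_drop, hdrop, List.append_assoc, List.drop_left, List.take_left]

lemma encounters_of_infix {α β : Type} {U U' : List β} {V : List α}
    (h : Encounters U' V) (hU : U' <:+: U) : Encounters U V := by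
  obtain ⟨W, hW, hI⟩ := h
  exact ⟨W, hW.trans hU, hI⟩

lemma zimin_encounter (q n : ℕ) :
    ∃ L : ℕ, ∀ W : List (Fin q), L ≤ W.length → Encounters W (Zimin n) := by
  induction n with
  | zero =>
    exact ⟨0, fun W _ => ⟨[], List.nil_infix, isInst_nil.mpr rfl⟩⟩
  | succ n ih =>
    classical
    obtain ⟨L, hL⟩ := ih
    set T := (Finset.range (L + 1)).biUnion (allWords q) with hT
    set B := T.card with hB
    refine ⟨(L + 1) * (B + 1), fun W hW => ?_⟩
    set F : ℕ → List (Fin q) := fun i =>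
      if h : ∃ V, V <:+: (W.drop (i * (L + 1))).take L ∧ IsInst (Zimin n) V then h.choose
      else [] with hF
    have hFspec : ∀ i, i ≤ B →
        F i <:+: (W.drop (i * (L + 1))).take L ∧ IsInst (Zimin n) (F i) := by
      intro i hi
      have hlen : L ≤ ((W.drop (i * (L + 1))).take L).length := by
        rw [List.length_take, List.length_drop]
        have e1 : (i + 1) * (L + 1) ≤ (B + 1) * (L + 1) :=
          mul_le_mul_left (by omega) (L + 1)
        have e2 : (i + 1) * (L + 1) = i * (L + 1) + (L + 1) := by ring
        have e3 : (B + 1) * (L + 1) = (L + 1) * (B + 1) := by ring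
        omega
      have hex : ∃ V, V <:+: (W.drop (i * (L + 1))).take L ∧ IsInst (Zimin n) V :=
        hL _ hlen
      rw [hF]
      simp only [dif_pos hex]
      exact hex.choose_spec
    have hmaps : ∀ i ∈ Finset.range (B + 1), F i ∈ T := by
      intro i hi
      rw [Finset.mem_range] at hi
      have hspec := hFspec i (by omega)
      have hlen : (F i).length ≤ L := by
        have h1 := hspec.1.length_le
        rw [List.length_take] at h1
        omega
      rw [hT]
      exact Finset.mem_biUnion.mpr ⟨(F i).length, Finset.mem_range.mpr (by omega),
        mem_allWords.mpr rfl⟩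
    have hcard : T.card < (Finset.range (B + 1)).card := by
      rw [Finset.card_range]; omega
    obtain ⟨i, hi, j, hj, hne, heq⟩ :=
      Finset.exists_ne_map_eq_of_card_lt_of_maps_to hcard hmaps
    rw [Finset.mem_range] at hi hj
    have hmain : ∀ i j : ℕ, i < j → j ≤ B → F i = F j → Encounters W (Zimin (n + 1)) := by
      intro i j hij hjB heq
      obtain ⟨hinf_i, hinst⟩ := hFspec i (by omega)
      obtain ⟨hinf_j, -⟩ := hFspec j hjB
      rw [← heq] at hinf_j
      set x := F i with hx
      obtain ⟨p, hp1, hp2, hp3⟩ := occ_of_infix_take hinf_i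
      obtain ⟨r, hr1, hr2, hr3⟩ := occ_of_infix_take hinf_j
      have e1 : (i + 1) * (L + 1) ≤ j * (L + 1) := mul_le_mul_left hij (L + 1)
      have e2 : (i + 1) * (L + 1) = i * (L + 1) + (L + 1) := by ring
      have hlt : p + x.length < r := by omega
      have e3 : (j + 1) * (L + 1) ≤ (B + 1) * (L + 1) := mul_le_mul_left (by omega) (L + 1)
      have e4 : (j + 1) * (L + 1) = j * (L + 1) + (L + 1) := by ring
      have e5 : (B + 1) * (L + 1) = (L + 1) * (B + 1) := by ring
      have hrW : r + x.length ≤ W.length := by omega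
      obtain ⟨u, hu, hinfix⟩ := infix_of_two_occ hp3 hr3 hlt hrW
      exact ⟨x ++ u ++ x, hinfix, isInst_zimin_succ.mpr ⟨x, u, hinst, hu, rfl⟩⟩
    rcases Nat.lt_or_ge i j with hij | hij
    · exact hmain i j hij (by omega) heq
    · exact hmain j i (by omega) (by omega) heq.symm

open Classical in
noncomputable def Eset (n q M : ℕ) : Finset (List (Fin q)) :=
  (allWords q M).filter (fun W => Encounters W (Zimin n))

open Classical in
noncomputable def Aset (n q M i L : ℕ) : Finset (List (Fin q)) :=
  (allWords q M).filter (fun W => IsInst (Zimin n) ((W.drop i).take L))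

def pairs (M : ℕ) : Finset (ℕ × ℕ) :=
  ((Finset.range (M + 1)) ×ˢ (Finset.range (M + 1))).filter
    (fun p => 1 ≤ p.2 ∧ p.1 + p.2 ≤ M)

lemma pairs_card (M : ℕ) : (pairs M).card * 2 ≤ (M + 1) * M := by
  classical
  have h1 : (pairs M).card ≤ ((Finset.range (M + 1)).sigma (fun j => Finset.range j)).card := by
    apply Finset.card_le_card_of_injOn (fun p => ⟨p.1 + p.2, p.1⟩)
    · intro p hp
      simp only [Finset.mem_coe, pairs, Finset.mem_filter, Finset.mem_product, Finset.mem_range] at hp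
      simp only [Finset.mem_coe, Finset.mem_sigma, Finset.mem_range]
      omega
    · intro p hp p' hp' heq
      have h1 := Sigma.mk.inj_iff.mp heq
      have h2 : p.1 = p'.1 := by exact_mod_cast eq_of_heq h1.2
      have h3 : p.1 + p.2 = p'.1 + p'.2 := h1.1
      exact Prod.ext h2 (by omega)
  rw [Finset.card_sigma] at h1
  simp only [Finset.card_range] at h1
  have h2 := Finset.sum_range_id_mul_two (M + 1)
  rw [Nat.add_sub_cancel] at h2
  omega

lemma Eset_subset (n q M : ℕ) (hn : 1 ≤ n) :
    Eset n q M ⊆ (pairs M).biUnion (fun p => Aset n q M p.1 p.2) := by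
  classical
  intro W hW
  simp only [Eset, Finset.mem_filter, mem_allWords] at hW
  obtain ⟨hlen, V, ⟨s, t, hst⟩, hI⟩ := hW
  have hVpos : 1 ≤ V.length := by
    have := isInst_zimin_length hI
    have h2 : 1 ≤ 2 ^ n - 1 := by
      have : 2 ^ 1 ≤ 2 ^ n := Nat.pow_le_pow_right (by norm_num) hn
      omega
    omega
  have hlens : s.length + V.length + t.length = M := by
    have := congrArg List.length hst
    simp only [List.length_append] at this
    omega
  apply Finset.mem_biUnion.mpr
  refine ⟨(s.length, V.length), ?_, ?_⟩
  · simp only [pairs, Finset.mem_filter, Finset.mem_product, Finset.mem_range]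
    omega
  · simp only [Aset, Finset.mem_filter, mem_allWords]
    refine ⟨hlen, ?_⟩
    have hdrop : W.drop s.length = V ++ t := by
      rw [← hst, List.append_assoc, List.drop_left]
    rw [hdrop, List.take_left]
    exact hI
lemma reconstruct {β : Type} (W : List β) (i L : ℕ) (hiL : i + L ≤ W.length) :
    (W.take i ++ W.drop (i + L)).take i ++
      ((W.drop i).take L ++ (W.take i ++ W.drop (i + L)).drop i) = W := by
  have hti : (W.take i).length = i := by
    rw [List.length_take]; omega
  rw [List.take_left' hti, List.drop_left' hti]
  have hdd : W.drop (i + L) = (W.drop i).drop L := by rw [List.drop_drop]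
  conv_rhs => rw [← List.take_append_drop i W]
  rw [hdd, List.take_append_drop]

lemma Aset_card {n q M i L : ℕ} (hiL : i + L ≤ M) :
    (Aset n q M i L).card ≤ (Iset n q L).card * q ^ (M - L) := by
  classical
  have key : (Aset n q M i L).card ≤ ((Iset n q L) ×ˢ (allWords q (M - L))).card := by
    apply Finset.card_le_card_of_injOn
      (fun W => ((W.drop i).take L, W.take i ++ W.drop (i + L)))
    · intro W hW
      simp only [Finset.mem_coe, Aset, Finset.mem_filter, mem_allWords] at hW
      obtain ⟨hlen, hI⟩ := hW
      simp only [Finset.mem_coe, Finset.mem_product, mem_Iset, mem_allWords]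
      refine ⟨⟨?_, hI⟩, ?_⟩
      · rw [List.length_take, List.length_drop]; omega
      · rw [List.length_append, List.length_take, List.length_drop]; omega
    · intro W hW W' hW' heq
      simp only [Aset, Finset.mem_coe, Finset.mem_filter, mem_allWords] at hW hW'
      have h1 : (W.drop i).take L = (W'.drop i).take L := congrArg Prod.fst heq
      have h2 : W.take i ++ W.drop (i + L) = W'.take i ++ W'.drop (i + L) :=
        congrArg Prod.snd heq
      have r1 := reconstruct W i L (by omega)
      have r2 := reconstruct W' i L (by omega)
      rw [← r1, ← r2, h1, h2]
  rw [Finset.card_product, card_allWords] at key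
  exact key

/-- First moment method: if `(M+1)M/2 · (q/(q−1))^{n−1} · q^{−2ⁿ+n+1} < 1`, then there
exists a `q`-ary word of length `M` that avoids `Zₙ`; consequently `f(n,q) > M`. -/
theorem exists_avoiding_word (n q M : ℕ) (hn : 1 ≤ n) (hq : 2 ≤ q) (hM : 1 ≤ M)
    (h : ((M : ℝ) + 1) * (M : ℝ) / 2 *
        ((q : ℝ) / ((q : ℝ) - 1)) ^ (n - 1) * (q : ℝ) ^ (-(2 ^ n : ℤ) + n + 1) < 1) :
    (∃ W : List (Fin q), W.length = M ∧ Avoids W (Zimin n)) ∧ M < zimf n q := by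
  classical
  have hQ1 : (1 : ℝ) < (q : ℝ) := by exact_mod_cast hq.trans_lt' one_lt_two
  have hQ0 : (0 : ℝ) < (q : ℝ) := by linarith
  have hQne : (q : ℝ) ≠ 0 := ne_of_gt hQ0
  -- Step 1: counting bound in ℕ
  have c1 : (Eset n q M).card ≤ ∑ p ∈ pairs M, (Iset n q p.2).card * q ^ (M - p.2) := by
    calc (Eset n q M).card
        ≤ ((pairs M).biUnion (fun p => Aset n q M p.1 p.2)).card :=
          Finset.card_le_card (Eset_subset n q M hn)
    _ ≤ ∑ p ∈ pairs M, (Aset n q M p.1 p.2).card := Finset.card_biUnion_le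
    _ ≤ ∑ p ∈ pairs M, (Iset n q p.2).card * q ^ (M - p.2) := by
        apply Finset.sum_le_sum
        intro p hp
        simp only [pairs, Finset.mem_filter, Finset.mem_product, Finset.mem_range] at hp
        exact Aset_card (by omega)
  -- Step 2: real bound on each term
  set K : ℝ := ((q : ℝ) / ((q : ℝ) - 1)) ^ (n - 1) * (q : ℝ) ^ ((M : ℤ) - 2 ^ n + n + 1)
    with hK
  have hK0 : 0 ≤ K := by
    apply mul_nonneg
    · apply pow_nonneg
      apply div_nonneg hQ0.le
      linarith
    · exact (zpow_pos hQ0 _).le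
  have c2 : ((Eset n q M).card : ℝ) ≤ ((pairs M).card : ℝ) * K := by
    calc ((Eset n q M).card : ℝ)
        ≤ ((∑ p ∈ pairs M, (Iset n q p.2).card * q ^ (M - p.2) : ℕ) : ℝ) := by
          exact_mod_cast c1
    _ = ∑ p ∈ pairs M, ((Iset n q p.2).card : ℝ) * (q : ℝ) ^ ((M : ℤ) - p.2) := by
        push_cast
        apply Finset.sum_congr rfl
        intro p hp
        simp only [pairs, Finset.mem_filter, Finset.mem_product, Finset.mem_range] at hp
        congr 1
        rw [← zpow_natCast (q : ℝ) (M - p.2)]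
        congr 1
        omega
    _ ≤ ∑ _p ∈ pairs M, K := by
        apply Finset.sum_le_sum
        intro p hp
        simp only [pairs, Finset.mem_filter, Finset.mem_product, Finset.mem_range] at hp
        have hb := Iset_bound hq n hn p.2
        have hnn : (0 : ℝ) ≤ (q : ℝ) ^ ((M : ℤ) - p.2) := (zpow_pos hQ0 _).le
        calc ((Iset n q p.2).card : ℝ) * (q : ℝ) ^ ((M : ℤ) - p.2)
            ≤ (((q : ℝ) / ((q : ℝ) - 1)) ^ (n - 1) *
                (q : ℝ) ^ ((p.2 : ℤ) - 2 ^ n + n + 1)) * (q : ℝ) ^ ((M : ℤ) - p.2) :=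
              mul_le_mul_of_nonneg_right hb hnn
        _ = K := by
            rw [hK, mul_assoc, ← zpow_add₀ hQne]
            congr 2
            ring
    _ = ((pairs M).card : ℝ) * K := by rw [Finset.sum_const, nsmul_eq_mul]
  -- Step 3: combine with the hypothesis
  have c3 : ((pairs M).card : ℝ) ≤ ((M : ℝ) + 1) * (M : ℝ) / 2 := by
    have := pairs_card M
    have h2 : (((pairs M).card * 2 : ℕ) : ℝ) ≤ (((M + 1) * M : ℕ) : ℝ) := by
      exact_mod_cast this
    push_cast at h2
    linarith
  have c4 : ((Eset n q M).card : ℝ) < (q : ℝ) ^ M := by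
    have hsplit : K = ((q : ℝ) / ((q : ℝ) - 1)) ^ (n - 1) *
        (q : ℝ) ^ (-(2 ^ n : ℤ) + n + 1) * (q : ℝ) ^ M := by
      rw [hK, mul_assoc, ← zpow_natCast (q : ℝ) M, ← zpow_add₀ hQne]
      congr 2
      ring
    have hpow : (0 : ℝ) < (q : ℝ) ^ M := pow_pos hQ0 M
    calc ((Eset n q M).card : ℝ) ≤ ((pairs M).card : ℝ) * K := c2
    _ ≤ (((M : ℝ) + 1) * (M : ℝ) / 2) * K := mul_le_mul_of_nonneg_right c3 hK0
    _ = (((M : ℝ) + 1) * (M : ℝ) / 2 * ((q : ℝ) / ((q : ℝ) - 1)) ^ (n - 1) *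
          (q : ℝ) ^ (-(2 ^ n : ℤ) + n + 1)) * (q : ℝ) ^ M := by
        rw [hsplit]; ring
    _ < 1 * (q : ℝ) ^ M := by
        apply mul_lt_mul_of_pos_right h hpow
    _ = (q : ℝ) ^ M := one_mul _
  have c5 : (Eset n q M).card < q ^ M := by
    have : ((Eset n q M).card : ℝ) < ((q ^ M : ℕ) : ℝ) := by push_cast; exact c4
    exact_mod_cast this
  -- Step 4: extract an avoiding word
  have hnotsub : ¬ (allWords q M ⊆ Eset n q M) := by
    intro hsub
    have := Finset.card_le_card hsub
    rw [card_allWords] at this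
    omega
  obtain ⟨W, hWmem, hWnot⟩ := Finset.not_subset.mp hnotsub
  have hWlen : W.length = M := mem_allWords.mp hWmem
  have hWav : Avoids W (Zimin n) := by
    intro henc
    exact hWnot (Finset.mem_filter.mpr ⟨hWmem, henc⟩)
  refine ⟨⟨W, hWlen, hWav⟩, ?_⟩
  -- Step 5: M < zimf
  obtain ⟨L₀, hL₀⟩ := zimin_encounter q n
  have hSne : {M' : ℕ | ∀ W : List (Fin q), W.length = M' →
      Encounters W (Zimin n)}.Nonempty :=
    ⟨L₀, fun W hW => hL₀ W (le_of_eq hW.symm)⟩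
  by_contra hge
  push_neg at hge
  unfold zimf at hge
  have hmem := Nat.sInf_mem hSne
  have henc : Encounters (W.take (sInf {M' : ℕ | ∀ W : List (Fin q),
      W.length = M' → Encounters W (Zimin n)})) (Zimin n) := by
    apply hmem
    rw [List.length_take]
    omega
  exact hWav (encounters_of_infix henc (W.take_prefix _).isInfix)
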